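/- Let N ≥ 2, let A be a free basis of the free group F_N, let a₀ ∈ A, and set A' = A ∖ {a₀}. Let Φ be an automorphism of F_N such that Φ maps the subgroup ⟨A'⟩ into itself and Φ(a₀) = a₀ u for some u ∈ ⟨A'⟩. Then for every g ∈ F_N and every integer n ≥ 0, the number of occurrences of the letters a₀ and a₀⁻¹ in the reduced word of Φ^n(g) over A is at most the number of occurrences of a₀ and a₀⁻¹ in the reduced word of g over A. -/

import Mathlib

open List

namespace SRF

variable {G : Type} [Group G]

/-- The element of `G` represented by a word whose letters are pairs
`(g, b)`, meaning `g` if `b = true` and `g⁻¹` if `b = false`. -/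
def evalWord (L : List (G × Bool)) : G :=
  (L.map fun p => if p.2 then p.1 else p.1⁻¹).prod

/-- All letters of the word lie in the set `A`. -/
def LettersIn (A : Set G) (L : List (G × Bool)) : Prop :=
  ∀ p ∈ L, p.1 ∈ A

/-- A word is (freely) reduced: no adjacent cancelling pair. -/
def IsRedWord (L : List (G × Bool)) : Prop :=
  L.Chain' fun p q => ¬(p.1 = q.1 ∧ p.2 = !q.2)

/-- A word is cyclically reduced: its double is reduced. -/
def IsCycRedWord (L : List (G × Bool)) : Prop :=
  IsRedWord (L ++ L)

/-- `A ⊆ G` is a free basis of `G`: the canonical homomorphism from the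
free group on `A` to `G` is bijective (i.e. `A` freely generates `G`). -/
def IsFreeBasis (A : Set G) : Prop :=
  Function.Bijective (FreeGroup.lift (fun a : A => (a : G)) : FreeGroup A →* G)

/-- `L` is the reduced word of `w` over `A`. -/
def IsRedWordOf (A : Set G) (L : List (G × Bool)) (w : G) : Prop :=
  LettersIn A L ∧ IsRedWord L ∧ evalWord L = w

/-- The word `u` occurs as a subword of the cyclically reduced form of `w`
over `A`: `u` is an infix of some cyclic permutation of a cyclically
reduced word over `A` representing the conjugacy class of `w`. -/
def OccursCyc (A : Set G) (u : List (G × Bool)) (w : G) : Prop :=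
  ∃ (L : List (G × Bool)) (n : ℕ),
    LettersIn A L ∧ IsCycRedWord L ∧ IsConj (evalWord L) w ∧ u <:+: L.rotate n

/-- The word `a^k` (|k| copies of the letter `a` with sign the sign of `k`). -/
def powWord (a : G) (k : ℤ) : List (G × Bool) :=
  List.replicate k.natAbs (a, decide (0 ≤ k))

open Classical in
/-- The number of occurrences of the letters `a` and `a⁻¹` in a word. -/
noncomputable def countLetter (a : G) (L : List (G × Bool)) : ℕ :=
  L.countP fun p => decide (p.1 = a)

/-- A chain'-reduced word is fixed by `FreeGroup.reduce`. -/
lemma reduce_eq_self {α : Type*} [DecidableEq α] (L : List (α × Bool))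
    (h : L.Chain' fun p q => ¬(p.1 = q.1 ∧ p.2 = !q.2)) : FreeGroup.reduce L = L := by
  induction L with
  | nil => rfl
  | cons x L ih =>
    rw [List.Chain', List.isChain_cons] at h
    rw [FreeGroup.reduce.cons, ih h.2]
    cases L with
    | nil => rfl
    | cons y t =>
      have hy : ¬(x.1 = y.1 ∧ x.2 = !y.2) := h.1 y rfl
      simp only [if_neg hy]

/-- Lift a word with letters in `A` to a word over the subtype `A`. -/
def liftWord (A : Set G) (L : List (G × Bool)) (hL : LettersIn A L) : List (↥A × Bool) :=
  L.pmap (fun (p : G × Bool) (hp : p.1 ∈ A) => ((⟨p.1, hp⟩ : A), p.2)) hL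

lemma liftWord_map (A : Set G) :
    ∀ (L : List (G × Bool)) (hL : LettersIn A L),
      (liftWord A L hL).map (fun x => ((x.1 : G), x.2)) = L
  | [], _ => rfl
  | p :: L, hL => by
    simp only [liftWord, List.pmap, List.map_cons]
    exact congrArg (List.cons p) (liftWord_map A L fun q hq => hL q (List.mem_cons_of_mem _ hq))
/-- Let `A` be a free basis of `F_N` (`N ≥ 2`), `a₀ ∈ A`,
`A' = A \ {a₀}`, and let `Φ ∈ Aut(F_N)` map `⟨A'⟩` into itself with
`Φ(a₀) = a₀ u` for some `u ∈ ⟨A'⟩`. Then for every `g ∈ F_N` and `n ≥ 0`, the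
number of occurrences of `a₀^{±1}` in the reduced word of `Φ^n(g)` over `A` is
at most the number of occurrences of `a₀^{±1}` in the reduced word of `g`. -/
theorem stmt_18 (N : ℕ) (hN : 2 ≤ N)
    (A : Set (FreeGroup (Fin N))) (hA : IsFreeBasis A)
    (a₀ : FreeGroup (Fin N)) (ha₀ : a₀ ∈ A)
    (Φ : MulAut (FreeGroup (Fin N)))
    (hinv : ∀ x ∈ Subgroup.closure (A \ {a₀}), Φ x ∈ Subgroup.closure (A \ {a₀}))
    (u : FreeGroup (Fin N)) (hu : u ∈ Subgroup.closure (A \ {a₀}))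
    (hΦa : Φ a₀ = a₀ * u)
    (g : FreeGroup (Fin N)) (n : ℕ)
    (Lg LΦ : List (FreeGroup (Fin N) × Bool))
    (hLg : IsRedWordOf A Lg g) (hLΦ : IsRedWordOf A LΦ ((Φ ^ n) g)) :
    countLetter a₀ LΦ ≤ countLetter a₀ Lg := by
  let e : FreeGroup ↥A ≃* FreeGroup (Fin N) :=
    MulEquiv.ofBijective (FreeGroup.lift fun a : ↥A => (a : FreeGroup (Fin N))) hA
  have he_apply : ∀ x, e x = FreeGroup.lift (fun a : ↥A => (a : FreeGroup (Fin N))) x :=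
    fun _ => rfl
  have he_of : ∀ a : ↥A, e (FreeGroup.of a) = (a : FreeGroup (Fin N)) :=
    fun a => FreeGroup.lift_apply_of
  have hsymm : ∀ (x : FreeGroup ↥A) (w : FreeGroup (Fin N)), e x = w → e.symm w = x := by
    intro x w h; rw [← h, MulEquiv.symm_apply_apply]
  let pr : ↥A × Bool → Bool :=
    fun p => @decide ((p.1 : FreeGroup (Fin N)) = a₀) (Classical.propDecidable _)
  let c : FreeGroup (Fin N) → ℕ := fun w => (e.symm w).toWord.countP pr
  have hc_mul : ∀ w v : FreeGroup (Fin N), c (w * v) ≤ c w + c v := by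
    intro w v
    have h1 : List.Sublist (e.symm (w * v)).toWord ((e.symm w).toWord ++ (e.symm v).toWord) := by
      rw [map_mul]; exact FreeGroup.toWord_mul_sublist _ _
    calc c (w * v) ≤ ((e.symm w).toWord ++ (e.symm v).toWord).countP pr := h1.countP_le
      _ = c w + c v := List.countP_append
  have hc_inv : ∀ w : FreeGroup (Fin N), c w⁻¹ = c w := by
    intro w
    show (e.symm w⁻¹).toWord.countP pr = (e.symm w).toWord.countP pr
    rw [map_inv, FreeGroup.toWord_inv, FreeGroup.invRev, List.countP_reverse, List.countP_map]
    rfl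
  have hc_one : c (1 : FreeGroup (Fin N)) = 0 := by
    show (e.symm 1).toWord.countP pr = 0
    rw [map_one, FreeGroup.toWord_one]; rfl
  let S : Subgroup (FreeGroup (Fin N)) :=
    { carrier := {v : FreeGroup (Fin N) | ∀ p ∈ (e.symm v).toWord, (p.1 : FreeGroup (Fin N)) ≠ a₀}
      one_mem' := by
        intro p hp
        rw [map_one, FreeGroup.toWord_one] at hp
        exact absurd hp (List.not_mem_nil (a := p))
      mul_mem' := by
        intro a b ha hb p hp
        have hsub : List.Sublist (e.symm (a * b)).toWord
            ((e.symm a).toWord ++ (e.symm b).toWord) := by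
          rw [map_mul]; exact FreeGroup.toWord_mul_sublist _ _
        rcases List.mem_append.1 (hsub.subset hp) with h | h
        · exact ha p h
        · exact hb p h
      inv_mem' := by
        intro a ha p hp
        rw [map_inv, FreeGroup.toWord_inv, FreeGroup.invRev, List.mem_reverse] at hp
        obtain ⟨q, hq, rfl⟩ := List.mem_map.1 hp
        exact ha q hq }
  have hclosS : Subgroup.closure (A \ {a₀}) ≤ S := by
    rw [Subgroup.closure_le]
    intro a ha
    show ∀ p ∈ (e.symm a).toWord, (p.1 : FreeGroup (Fin N)) ≠ a₀
    intro p hp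
    have h1 : e.symm a = FreeGroup.of (⟨a, ha.1⟩ : ↥A) := hsymm _ _ (he_of _)
    rw [h1, FreeGroup.toWord_of] at hp
    rw [List.mem_singleton.1 hp]
    exact ha.2
  have hc_clos : ∀ v ∈ Subgroup.closure (A \ {a₀}), c v = 0 := by
    intro v hv
    refine List.countP_eq_zero.2 fun p hp => ?_
    have h2 := hclosS hv p hp
    simpa [pr] using h2
  have hpow : ∀ (m : ℕ) (v : FreeGroup (Fin N)), v ∈ Subgroup.closure (A \ {a₀}) →
      (Φ ^ m) v ∈ Subgroup.closure (A \ {a₀}) := by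
    intro m
    induction m with
    | zero => intro v hv; simpa using hv
    | succ m ih =>
      intro v hv
      have h1 : (Φ ^ (m + 1)) v = (Φ ^ m) (Φ v) := by rw [pow_succ]; rfl
      rw [h1]; exact ih _ (hinv v hv)
  have hpa : ∀ m : ℕ, ∃ w ∈ Subgroup.closure (A \ {a₀}), (Φ ^ m) a₀ = a₀ * w := by
    intro m
    induction m with
    | zero => exact ⟨1, one_mem _, by simp⟩
    | succ m ih =>
      obtain ⟨w, hw, hwE⟩ := ih
      refine ⟨u * Φ w, mul_mem hu (hinv w hw), ?_⟩
      have h1 : (Φ ^ (m + 1)) a₀ = Φ ((Φ ^ m) a₀) := by rw [pow_succ']; rfl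
      rw [h1, hwE, map_mul, hΦa, mul_assoc]
  have hca : c a₀ ≤ 1 := by
    have h1 : e.symm a₀ = FreeGroup.of (⟨a₀, ha₀⟩ : ↥A) := hsymm _ _ (he_of _)
    show (e.symm a₀).toWord.countP pr ≤ 1
    rw [h1, FreeGroup.toWord_of]
    exact List.countP_le_length
  have hgen : ∀ a : ↥A, c ((Φ ^ n) (a : FreeGroup (Fin N))) ≤ (if pr (a, true) then 1 else 0) := by
    intro a
    by_cases hx : (a : FreeGroup (Fin N)) = a₀
    · obtain ⟨w, hw, hwE⟩ := hpa n
      rw [hx, hwE]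
      have h2 : c (a₀ * w) ≤ 1 := by
        refine le_trans (hc_mul _ _) ?_
        rw [hc_clos w hw]
        simpa using hca
      refine le_trans h2 ?_
      simp [pr, hx]
    · have h3 : (a : FreeGroup (Fin N)) ∈ Subgroup.closure (A \ {a₀}) :=
        Subgroup.subset_closure ⟨a.2, hx⟩
      rw [hc_clos _ (hpow n _ h3)]
      exact Nat.zero_le _
  have key : ∀ L : List (↥A × Bool), c ((Φ ^ n) (e (FreeGroup.mk L))) ≤ L.countP pr := by
    intro L
    induction L with
    | nil =>
      rw [show FreeGroup.mk ([] : List (↥A × Bool)) = 1 from FreeGroup.one_eq_mk.symm,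
        map_one, map_one, hc_one]
      exact Nat.zero_le _
    | cons x L ih =>
      rw [show FreeGroup.mk (x :: L) = FreeGroup.mk [x] * FreeGroup.mk L from
        (FreeGroup.mul_mk (L₁ := [x]) (L₂ := L)).symm, map_mul, map_mul]
      refine le_trans (hc_mul _ _) ?_
      have hx : c ((Φ ^ n) (e (FreeGroup.mk [x]))) ≤ (if pr x then 1 else 0) := by
        rcases x with ⟨a, b⟩
        cases b
        · have h4 : FreeGroup.mk [((a : ↥A), false)] = (FreeGroup.of a)⁻¹ := by
            show _ = (FreeGroup.mk [((a : ↥A), true)])⁻¹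
            rw [FreeGroup.inv_mk]
            simp [FreeGroup.invRev]
          rw [h4, map_inv, map_inv, hc_inv, he_of]
          exact hgen a
        · have h4 : FreeGroup.mk [((a : ↥A), true)] = FreeGroup.of a := rfl
          rw [h4, he_of]
          exact hgen a
      rw [List.countP_cons]
      exact le_trans (Nat.add_le_add hx ih) (le_of_eq (Nat.add_comm _ _))
  have htrans : ∀ (L : List (FreeGroup (Fin N) × Bool)) (w : FreeGroup (Fin N))
      (h : IsRedWordOf A L w), (e.symm w).toWord = liftWord A L h.1 := by
    intro L w h
    obtain ⟨hLA, hLR, hLE⟩ := h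
    have hmap := liftWord_map A L hLA
    have heval : e (FreeGroup.mk (liftWord A L hLA)) = w := by
      have hml : List.map (fun x => cond x.2 ((x.1 : FreeGroup (Fin N)))
            ((x.1 : FreeGroup (Fin N)))⁻¹) (liftWord A L hLA)
          = List.map (fun p => if p.2 then p.1 else p.1⁻¹) L := by
        conv_rhs => rw [← hmap]
        rw [List.map_map]
        congr 1
        funext p
        rcases p with ⟨a, b⟩
        cases b <;> rfl
      rw [he_apply, FreeGroup.lift_mk, hml, ← hLE]
      rfl
    have hred : FreeGroup.reduce (liftWord A L hLA) = liftWord A L hLA := by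
      apply reduce_eq_self
      have h5 : List.Chain' (fun p q => ¬(p.1 = q.1 ∧ p.2 = !q.2))
          ((liftWord A L hLA).map fun x => ((x.1 : FreeGroup (Fin N)), x.2)) := by
        rw [hmap]; exact hLR
      rw [List.Chain', List.isChain_map] at h5
      exact h5.imp fun {p q} h hpq => h ⟨congrArg Subtype.val hpq.1, hpq.2⟩
    calc (e.symm w).toWord = (FreeGroup.mk (liftWord A L hLA)).toWord := by
          rw [hsymm _ _ heval]
      _ = liftWord A L hLA := by rw [FreeGroup.toWord_mk, hred]
  have hcount : ∀ (L : List (FreeGroup (Fin N) × Bool)) (w : FreeGroup (Fin N))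
      (h : IsRedWordOf A L w), c w = countLetter a₀ L := by
    intro L w h
    show (e.symm w).toWord.countP pr = countLetter a₀ L
    rw [htrans L w h]
    calc (liftWord A L h.1).countP pr
        = ((liftWord A L h.1).map fun x => ((x.1 : FreeGroup (Fin N)), x.2)).countP
            (fun p => @decide (p.1 = a₀) (Classical.propDecidable _)) := by
          rw [List.countP_map]; rfl
      _ = countLetter a₀ L := by rw [liftWord_map]; rfl
  rw [← hcount Lg g hLg, ← hcount LΦ ((Φ ^ n) g) hLΦ]
  have hg : e (FreeGroup.mk ((e.symm g).toWord)) = g := by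
    rw [FreeGroup.mk_toWord, MulEquiv.apply_symm_apply]
  calc c ((Φ ^ n) g) = c ((Φ ^ n) (e (FreeGroup.mk ((e.symm g).toWord)))) := by rw [hg]
    _ ≤ ((e.symm g).toWord).countP pr := key _
    _ = c g := rfl


end SRF
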